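/- arXiv:2507.08397 — 2 statements merged into one kernel-verified Lean document; each statement's English description precedes it below -/
import Mathlib

section
/- Every group homomorphism φ from UT₃(𝔽₃) to the multiplicative group ℂˣ of nonzero complex numbers is of the form ρ_{r,s} for some (r,s) ∈ ZMod 3 × ZMod 3; that is, there exist r, s ∈ ZMod 3 such that φ(g(a,b,c)) = ω^{(r*a + s*c).val} for all a,b,c ∈ ZMod 3. -/
open Matrix

/-- The upper unitriangular matrix g(a,b,c) over ZMod 3. -/
def gmat (a b c : ZMod 3) : Matrix (Fin 3) (Fin 3) (ZMod 3) :=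
  !![1, a, b; 0, 1, c; 0, 0, 1]

lemma gmat_mul (a b c a' b' c' : ZMod 3) :
    gmat a b c * gmat a' b' c' = gmat (a + a') (b + b' + a * c') (c + c') := by
  ext i j
  fin_cases i <;> fin_cases j <;>
    simp [gmat, Matrix.mul_apply, Fin.sum_univ_succ, Matrix.vecHead, Matrix.vecTail] <;> ring

lemma gmat_one : gmat 0 0 0 = 1 := by
  ext i j
  fin_cases i <;> fin_cases j <;> simp [gmat, Matrix.one_apply, Matrix.vecHead, Matrix.vecTail]

lemma gmat_mul_inv (a b c : ZMod 3) :
    gmat a b c * gmat (-a) (a * c - b) (-c) = 1 := by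
  rw [gmat_mul, show a + -a = (0 : ZMod 3) by ring,
    show b + (a * c - b) + a * -c = (0 : ZMod 3) by ring,
    show c + -c = (0 : ZMod 3) by ring, gmat_one]

lemma gmat_inv_mul (a b c : ZMod 3) :
    gmat (-a) (a * c - b) (-c) * gmat a b c = 1 := by
  rw [gmat_mul, show -a + a = (0 : ZMod 3) by ring,
    show a * c - b + b + -a * c = (0 : ZMod 3) by ring,
    show -c + c = (0 : ZMod 3) by ring, gmat_one]

/-- g(a,b,c) as a unit of the matrix ring. -/
def gUnit (a b c : ZMod 3) : (Matrix (Fin 3) (Fin 3) (ZMod 3))ˣ :=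
  ⟨gmat a b c, gmat (-a) (a * c - b) (-c), gmat_mul_inv a b c, gmat_inv_mul a b c⟩

/-- The subgroup UT₃(𝔽₃) of upper unitriangular matrices. -/
def UT3 : Subgroup (Matrix (Fin 3) (Fin 3) (ZMod 3))ˣ where
  carrier := {x | ∃ a b c : ZMod 3, (x : Matrix (Fin 3) (Fin 3) (ZMod 3)) = gmat a b c}
  one_mem' := ⟨0, 0, 0, by simpa using gmat_one.symm⟩
  mul_mem' := by
    rintro x y ⟨a, b, c, hx⟩ ⟨a', b', c', hy⟩
    exact ⟨a + a', b + b' + a * c', c + c', by rw [Units.val_mul, hx, hy, gmat_mul]⟩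
  inv_mem' := by
    rintro x ⟨a, b, c, hx⟩
    refine ⟨-a, a * c - b, -c, ?_⟩
    exact Units.inv_eq_of_mul_eq_one_right (by rw [hx, gmat_mul_inv])

/-- g(a,b,c) as an element of UT₃(𝔽₃). -/
def gU (a b c : ZMod 3) : UT3 := ⟨gUnit a b c, ⟨a, b, c, rfl⟩⟩

noncomputable def ω : ℂ := Complex.exp (2 * Real.pi * Complex.I / 3)

lemma gU_mul (a b c a' b' c' : ZMod 3) :
    gU a b c * gU a' b' c' = gU (a + a') (b + b' + a * c') (c + c') :=
  Subtype.ext (Units.ext (gmat_mul a b c a' b' c'))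

lemma gU_one : gU 0 0 0 = 1 := Subtype.ext (Units.ext gmat_one)

lemma gU_a_pow (a : ZMod 3) : gU a 0 0 = (gU 1 0 0) ^ a.val := by
  have h : ∀ n : ℕ, gU (n : ZMod 3) 0 0 = (gU 1 0 0) ^ n := by
    intro n; induction n with
    | zero => simpa using gU_one
    | succ n ih => rw [pow_succ, ← ih, gU_mul]; push_cast; norm_num
  have := h a.val
  rwa [ZMod.natCast_val, ZMod.cast_id] at this

lemma gU_b_pow (b : ZMod 3) : gU 0 b 0 = (gU 0 1 0) ^ b.val := by
  have h : ∀ n : ℕ, gU 0 (n : ZMod 3) 0 = (gU 0 1 0) ^ n := by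
    intro n; induction n with
    | zero => simpa using gU_one
    | succ n ih => rw [pow_succ, ← ih, gU_mul]; push_cast; norm_num
  have := h b.val
  rwa [ZMod.natCast_val, ZMod.cast_id] at this

lemma gU_c_pow (c : ZMod 3) : gU 0 0 c = (gU 0 0 1) ^ c.val := by
  have h : ∀ n : ℕ, gU 0 0 (n : ZMod 3) = (gU 0 0 1) ^ n := by
    intro n; induction n with
    | zero => simpa using gU_one
    | succ n ih => rw [pow_succ, ← ih, gU_mul]; push_cast; norm_num
  have := h c.val
  rwa [ZMod.natCast_val, ZMod.cast_id] at this

lemma omega_prim : IsPrimitiveRoot ω 3 := by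
  have := Complex.isPrimitiveRoot_exp 3 (by norm_num)
  simpa [ω] using this

lemma omega_pow_mod (m : ℕ) : ω ^ m = ω ^ (m % 3) := by
  conv_lhs => rw [← Nat.mod_add_div m 3]
  rw [pow_add, pow_mul, omega_prim.pow_eq_one, one_pow, mul_one]

lemma omega_pow_congr {m n : ℕ} (h : (m : ZMod 3) = (n : ZMod 3)) : ω ^ m = ω ^ n := by
  rw [omega_pow_mod m, omega_pow_mod n]
  have := (ZMod.natCast_eq_natCast_iff m n 3).mp h
  rw [this]

/-- Every homomorphism UT₃(𝔽₃) → ℂˣ is one of the ρ_{r,s}. -/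
theorem UT3_one_dim_rep_classification (φ : UT3 →* ℂˣ) :
    ∃ r s : ZMod 3,
      ∀ a b c : ZMod 3, (φ (gU a b c) : ℂ) = ω ^ (r * a + s * c).val := by
  -- φ kills the commutator g(0,1,0)
  have hcomm : φ (gU 0 1 0) = 1 := by
    have h1 : gU 1 0 0 * gU 0 0 1 = gU 0 1 0 * (gU 0 0 1 * gU 1 0 0) := by
      rw [gU_mul, gU_mul, gU_mul]; norm_num
    have := congrArg φ h1
    rw [_root_.map_mul, _root_.map_mul, _root_.map_mul] at this
    rw [mul_comm (φ (gU 0 0 1))] at this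
    exact right_eq_mul.mp this
  -- the generators have order dividing 3
  have hx3 : (φ (gU 1 0 0) : ℂ) ^ 3 = 1 := by
    have : (gU 1 0 0) ^ 3 = 1 := by
      rw [pow_succ, pow_two, gU_mul, gU_mul, show (1+1+1 : ZMod 3) = 0 by decide]
      norm_num [gU_one]
    have := congrArg φ this
    rw [map_pow, _root_.map_one] at this
    simpa using congrArg Units.val this
  have hy3 : (φ (gU 0 0 1) : ℂ) ^ 3 = 1 := by
    have : (gU 0 0 1) ^ 3 = 1 := by
      rw [pow_succ, pow_two, gU_mul, gU_mul, show (1+1+1 : ZMod 3) = 0 by decide]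
      norm_num [gU_one]
    have := congrArg φ this
    rw [map_pow, _root_.map_one] at this
    simpa using congrArg Units.val this
  obtain ⟨i, hi3, hi⟩ := omega_prim.eq_pow_of_pow_eq_one hx3
  obtain ⟨j, hj3, hj⟩ := omega_prim.eq_pow_of_pow_eq_one hy3
  refine ⟨(i : ZMod 3), (j : ZMod 3), fun a b c => ?_⟩
  have hsplit : gU a b c = gU 0 b 0 * gU 0 0 c * gU a 0 0 := by
    rw [gU_mul, gU_mul]; norm_num
  rw [hsplit, _root_.map_mul, _root_.map_mul, gU_b_pow, gU_c_pow, gU_a_pow, map_pow, map_pow, map_pow,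
    hcomm, one_pow, one_mul]
  push_cast
  rw [← hi, ← hj, ← pow_mul, ← pow_mul, ← pow_add]
  exact (omega_pow_congr (by push_cast [ZMod.natCast_val, ZMod.cast_id]; ring)).symm
end

section
/- For each k ∈ {1,2}, the character of the three-dimensional representation ρ_k of UT₃(𝔽₃) satisfies: the trace of ρ_k(g(a,b,c)) equals 3·ω^{(k•b).val} if a = 0 and c = 0, and equals 0 otherwise. -/
open Matrix

/-- The linear map ρ_k(g(a,b,c)) acting on ZMod 3 → ℂ. -/
noncomputable def rhoMap (k : ℕ) (a b c : ZMod 3) : (ZMod 3 → ℂ) →ₗ[ℂ] (ZMod 3 → ℂ) where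
  toFun φ := fun n => ω ^ ((k • (b + n * c)).val) * φ (n + a)
  map_add' φ ψ := by funext n; simp [mul_add]
  map_smul' r φ := by funext n; simp [smul_eq_mul]; ring

lemma omega_sum : 1 + ω + ω ^ 2 = 0 := by
  have := omega_prim.geom_sum_eq_zero (by norm_num)
  rw [Finset.sum_range_succ, Finset.sum_range_succ, Finset.sum_range_one] at this
  linear_combination this

lemma sum_zmod3 (f : ZMod 3 → ℂ) : ∑ n, f n = f 0 + f 1 + f 2 := by
  show ∑ n : Fin 3, f n = _
  exact Fin.sum_univ_three f

lemma sum_omega_val : ∑ m : ZMod 3, ω ^ m.val = 0 := by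
  rw [sum_zmod3]
  simp only [show (0 : ZMod 3).val = 0 from rfl, show (1 : ZMod 3).val = 1 from rfl,
    show (2 : ZMod 3).val = 2 from rfl]
  linear_combination omega_sum

/-- The character of ρ_k: the trace of ρ_k(g(a,b,c)) is 3ω^{(k•b).val} when a = c = 0 and 0
otherwise. -/
theorem UT3_three_dim_rep_character (k : ℕ) (hk : k = 1 ∨ k = 2) (a b c : ZMod 3) :
    LinearMap.trace ℂ (ZMod 3 → ℂ) (rhoMap k a b c) =
      if a = 0 ∧ c = 0 then 3 * ω ^ ((k • b).val) else 0 := by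
  rw [LinearMap.trace_eq_matrix_trace ℂ (Pi.basisFun ℂ (ZMod 3)), Matrix.trace]
  have key : ∀ n : ZMod 3,
      (LinearMap.toMatrix (Pi.basisFun ℂ (ZMod 3)) (Pi.basisFun ℂ (ZMod 3))
        (rhoMap k a b c)).diag n
      = ω ^ ((k • (b + n * c)).val) * ((Pi.single n 1 : ZMod 3 → ℂ) (n + a)) := by
    intro n
    simp [Matrix.diag, LinearMap.toMatrix_apply, rhoMap]
  rw [Finset.sum_congr rfl fun n _ => key n]
  by_cases ha : a = 0
  · subst ha
    have h1 : ∀ n : ZMod 3, (Pi.single n 1 : ZMod 3 → ℂ) (n + 0) = 1 := by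
      intro n; rw [add_zero, Pi.single_eq_same]
    by_cases hc : c = 0
    · subst hc
      rw [if_pos ⟨rfl, rfl⟩, sum_zmod3]
      simp only [h1, mul_zero, add_zero, Pi.single_eq_same, mul_one]
      ring
    · rw [if_neg (by tauto)]
      have hkc : (k : ZMod 3) * c ≠ 0 :=
        mul_ne_zero (by rcases hk with rfl | rfl <;> decide) hc
      have hg : Function.Bijective
          (fun n : ZMod 3 => (k : ZMod 3) * b + n * ((k : ZMod 3) * c)) := by
        apply Finite.injective_iff_bijective.mp
        intro x y hxy
        exact mul_right_cancel₀ hkc (by simpa using hxy)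
      calc ∑ n : ZMod 3, ω ^ ((k • (b + n * c)).val) * (Pi.single n 1 : ZMod 3 → ℂ) (n + 0)
          = ∑ n : ZMod 3, ω ^ (((k : ZMod 3) * b + n * ((k : ZMod 3) * c)).val) := by
            refine Finset.sum_congr rfl fun n _ => ?_
            rw [h1, mul_one, show k • (b + n * c) = (k : ZMod 3) * b + n * ((k : ZMod 3) * c) by
              rw [nsmul_eq_mul]; ring]
        _ = ∑ m : ZMod 3, ω ^ m.val :=
            Fintype.sum_bijective _ hg
              (fun n => ω ^ (((k : ZMod 3) * b + n * ((k : ZMod 3) * c)).val))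
              (fun m => ω ^ m.val) (fun n => rfl)
        _ = 0 := sum_omega_val
  · rw [if_neg (by tauto)]
    have h0 : ∀ n : ZMod 3, (Pi.single n 1 : ZMod 3 → ℂ) (n + a) = 0 := fun n =>
      Pi.single_eq_of_ne (by simpa using fun h => ha (by linear_combination h)) 1
    simp [h0]
end
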